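/- Let (E, L, B) be a weakly left-resolving labelled space with the property that r(A \ B, a) ⊆ r(A, a) \ r(B, a) for all A, B ∈ B and all letters a in the alphabet. Then (E, L, B) is regular: whenever A, B ∈ B satisfy that L(A E^1) = L(B E^1) is finite, A and B contain no sinks, and r(A, a) = r(B, a) for all a ∈ L(A E^1), it follows that A = B. -/

import Mathlib

/-- A labelled graph: a directed graph with source, range maps and a labelling of edges. -/
structure LabelledGraph (V E A : Type*) where
  src : E → V
  rng : E → V
  lab : E → A

namespace LabelledGraph

variable {V E A : Type*}

/-- `es` is a (nonempty, composable) path of edges. -/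
def IsPath (G : LabelledGraph V E A) (es : List E) : Prop :=
  es ≠ [] ∧ es.Chain' (fun e f => G.rng e = G.src f)

/-- The relative range `r(S, α)`: ranges of paths labelled `α` whose source lies in `S`. -/
def relRange (G : LabelledGraph V E A) (S : Set V) (α : List A) : Set V :=
  { w | ∃ es : List E, G.IsPath es ∧ es.map G.lab = α ∧
        (∀ e ∈ es.head?, G.src e ∈ S) ∧ ∃ e ∈ es.getLast?, G.rng e = w }

/-- `α` is a labelled path if it is the label of some path in the graph. -/
def IsLabelledPath (G : LabelledGraph V E A) (α : List A) : Prop :=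
  (G.relRange Set.univ α).Nonempty

/-- The graph is left-resolving: the labelling is injective on edges into each vertex. -/
def LeftResolving (G : LabelledGraph V E A) : Prop :=
  ∀ e f : E, G.rng e = G.rng f → G.lab e = G.lab f → e = f

/-- `L(S E¹)`, the set of labels of edges emitted from `S`. -/
def labelsFrom (G : LabelledGraph V E A) (S : Set V) : Set A :=
  G.lab '' (G.src ⁻¹' S)

/-- A sink: a vertex emitting no edges. -/
def IsSink (G : LabelledGraph V E A) (v : V) : Prop := ∀ e : E, G.src e ≠ v

/-- `𝓑` is accommodating for `G`. -/
def Accommodating (G : LabelledGraph V E A) (𝓑 : Set (Set V)) : Prop :=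
  (∀ S ∈ 𝓑, ∀ α : List A, G.IsLabelledPath α → G.relRange S α ∈ 𝓑) ∧
  (∀ α : List A, G.IsLabelledPath α → G.relRange Set.univ α ∈ 𝓑) ∧
  (∀ S ∈ 𝓑, ∀ T ∈ 𝓑, S ∩ T ∈ 𝓑) ∧
  (∀ S ∈ 𝓑, ∀ T ∈ 𝓑, S ∪ T ∈ 𝓑)

/-- The labelled space `(E, L, 𝓑)` is weakly left-resolving. -/
def WeaklyLeftResolving (G : LabelledGraph V E A) (𝓑 : Set (Set V)) : Prop :=
  ∀ S ∈ 𝓑, ∀ T ∈ 𝓑, ∀ α : List A, G.IsLabelledPath α →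
    G.relRange (S ∩ T) α = G.relRange S α ∩ G.relRange T α

/-- The labelled space `(E, L, 𝓑)` is regular. -/
def Regular (G : LabelledGraph V E A) (𝓑 : Set (Set V)) : Prop :=
  ∀ S ∈ 𝓑, ∀ T ∈ 𝓑,
    G.labelsFrom S = G.labelsFrom T → (G.labelsFrom S).Finite →
    (∀ v ∈ S, ¬ G.IsSink v) → (∀ v ∈ T, ¬ G.IsSink v) →
    (∀ a ∈ G.labelsFrom S, G.relRange S [a] = G.relRange T [a]) →
    S = T

end LabelledGraph

theorem stmt2 {V E A : Type*} (G : LabelledGraph V E A) (𝓑 : Set (Set V))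
    (hacc : G.Accommodating 𝓑) (hwlr : G.WeaklyLeftResolving 𝓑)
    (hsub : ∀ S ∈ 𝓑, ∀ T ∈ 𝓑, ∀ a : A,
      G.relRange (S \ T) [a] ⊆ G.relRange S [a] \ G.relRange T [a]) :
    G.Regular 𝓑 := by
  have key : ∀ (U : Set V) (e : E), G.src e ∈ U → G.rng e ∈ G.relRange U [G.lab e] := by
    intro U e he
    exact ⟨[e], ⟨by simp, List.isChain_singleton e⟩, by simp, by simpa using he, ⟨e, by simp⟩⟩
  intro S hS T hT hlab _ hsinkS hsinkT heq
  ext v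
  constructor
  · intro hv
    by_contra hvT
    obtain ⟨e, he⟩ := not_forall.mp (hsinkS v hv)
    have he : G.src e = v := not_not.mp he
    have h1 : G.rng e ∈ G.relRange (S \ T) [G.lab e] := key _ e ⟨he ▸ hv, he ▸ hvT⟩
    have h2 := hsub S hS T hT (G.lab e) h1
    have ha : G.lab e ∈ G.labelsFrom S := ⟨e, by rw [Set.mem_preimage, he]; exact hv, rfl⟩
    rw [heq _ ha] at h2
    exact h2.2 h2.1
  · intro hv
    by_contra hvS
    obtain ⟨e, he⟩ := not_forall.mp (hsinkT v hv)
    have he : G.src e = v := not_not.mp he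
    have h1 : G.rng e ∈ G.relRange (T \ S) [G.lab e] := key _ e ⟨he ▸ hv, he ▸ hvS⟩
    have h2 := hsub T hT S hS (G.lab e) h1
    have ha : G.lab e ∈ G.labelsFrom S := hlab ▸ ⟨e, by rw [Set.mem_preimage, he]; exact hv, rfl⟩
    rw [← heq _ ha] at h2
    exact h2.2 h2.1
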